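/- In the setting above, the sequence A^G →^{p_*×q_*} E₁^G × E₂^G →^{μ₁+μ₂} H¹(G,Δ) is exact: a pair (e₁, e₂) of invariant points satisfies μ₁(e₁) + μ₂(e₂) = 0 in H¹(G, Δ) if and only if there exists a ∈ A^G with p_*(a) = e₁ and q_*(a) = e₂. -/
import Mathlib


/-- In the setting of the anti-diagonal construction with divisible `G`-modules
`E₁`, `E₂` and common `m`-torsion `Δ`, the sequence
`A^G → E₁^G × E₂^G → H¹(G, Δ)` (via `p_* × q_*` and then `μ₁ + μ₂`) is exact: a pair
`(e₁, e₂)` of invariant points satisfies `μ₁(e₁) + μ₂(e₂) = 0` in `H¹(G, Δ)` (i.e. for some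
lifts `e₁'`, `e₂'` with `m • e₁' = e₁`, `m • e₂' = e₂`, the sum of the Kummer cocycles is a
coboundary) if and only if there is an invariant `a ∈ A^G` (represented by `x` with
`g • x − x ∈ Δ_E` for all `g`) with `p_*(a) = m • x.1 = e₁` and `q_*(a) = m • x.2 = e₂`. -/
theorem stmt_12 (G : Type*) [Group G] (E₁ E₂ Δ : Type*)
    [AddCommGroup E₁] [AddCommGroup E₂] [AddCommGroup Δ]
    [DistribMulAction G E₁] [DistribMulAction G E₂] [DistribMulAction G Δ]
    (m : ℕ) (hm : 2 ≤ m)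
    (hdiv₁ : ∀ e : E₁, ∃ e', m • e' = e) (hdiv₂ : ∀ e : E₂, ∃ e', m • e' = e)
    (j₁ : Δ →+ E₁) (j₂ : Δ →+ E₂)
    (hj₁ : Function.Injective j₁) (hj₂ : Function.Injective j₂)
    (hj₁G : ∀ (g : G) (d : Δ), j₁ (g • d) = g • j₁ d)
    (hj₂G : ∀ (g : G) (d : Δ), j₂ (g • d) = g • j₂ d)
    (hj₁tor : ∀ e : E₁, (∃ d, j₁ d = e) ↔ m • e = 0)
    (hj₂tor : ∀ e : E₂, (∃ d, j₂ d = e) ↔ m • e = 0)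
    (ΔE : AddSubgroup (E₁ × E₂)) (hΔE : ∀ x, x ∈ ΔE ↔ ∃ d, x = (j₁ d, -j₂ d))
    (e₁ : E₁) (e₂ : E₂) (he₁ : ∀ g : G, g • e₁ = e₁) (he₂ : ∀ g : G, g • e₂ = e₂) :
    (∃ (e₁' : E₁) (e₂' : E₂) (δ₁ δ₂ : G → Δ) (c : Δ),
        m • e₁' = e₁ ∧ m • e₂' = e₂ ∧
        (∀ g : G, j₁ (δ₁ g) = g • e₁' - e₁') ∧ (∀ g : G, j₂ (δ₂ g) = g • e₂' - e₂') ∧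
        (∀ g : G, δ₁ g + δ₂ g = g • c - c)) ↔
      ∃ x : E₁ × E₂, (∀ g : G, g • x - x ∈ ΔE) ∧ m • x.1 = e₁ ∧ m • x.2 = e₂ := by
  constructor
  · rintro ⟨e₁', e₂', δ₁, δ₂, c, h1, h2, hδ1, hδ2, hc⟩
    refine ⟨(e₁' - j₁ c, e₂'), fun g => ?_, ?_, h2⟩
    · rw [hΔE]
      refine ⟨-δ₂ g, ?_⟩
      have hfst : g • (e₁' - j₁ c) - (e₁' - j₁ c) = j₁ (-δ₂ g) := by
        have : g • j₁ c - j₁ c = j₁ (g • c - c) := by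
          rw [map_sub, hj₁G]
        rw [smul_sub, map_neg]
        have h := hδ1 g
        have h2' : j₁ (δ₁ g) + j₁ (δ₂ g) = g • j₁ c - j₁ c := by
          rw [this, ← hc g, map_add]
        linear_combination (norm := abel) h2' - h
      have hsnd : g • e₂' - e₂' = -j₂ (-δ₂ g) := by
        rw [map_neg, neg_neg, hδ2]
      exact Prod.ext hfst hsnd
    · have hc0 : m • j₁ c = 0 := (hj₁tor (j₁ c)).mp ⟨c, rfl⟩
      simp only [smul_sub, h1, hc0, sub_zero]
  · rintro ⟨x, hx, hx1, hx2⟩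
    choose d hd using fun g => (hΔE _).mp (hx g)
    refine ⟨x.1, x.2, d, fun g => -d g, 0, hx1, hx2, fun g => ?_, fun g => ?_, fun g => ?_⟩
    · have := congrArg Prod.fst (hd g)
      simpa using this.symm
    · have := congrArg Prod.snd (hd g)
      simp only [map_neg]
      simpa using this.symm
    · simp
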